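/- For any m ≥ 1, the Bernoulli polynomial of higher order of degree 2 satisfies B_2(x_1,…,x_m) = (3 p_1^2 - p_2)/12, where p_k = Σ_{i=1}^m x_i^k, and of degree 3 satisfies B_3(x_1,…,x_m) = -p_1(p_1^2 - p_2)/8. -/

import Mathlib

open scoped BigOperators

/-- The power sum `p_k = ∑_{i=1}^m x_i^k`. -/
noncomputable def psum (m k : ℕ) : MvPolynomial (Fin m) ℚ :=
  ∑ i : Fin m, MvPolynomial.X i ^ k

/-- The Bernoulli polynomial of higher order `B_n(x_1,…,x_m)`, defined by
`∏_{i=1}^m (x_i t)/(e^{x_i t}-1) = ∑_{n≥0} B_n(x^m) t^n/n!`. -/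
noncomputable def higherBernoulli (m n : ℕ) : MvPolynomial (Fin m) ℚ :=
  (Nat.factorial n : ℚ) •
    PowerSeries.coeff (R := MvPolynomial (Fin m) ℚ) n
      (∏ i : Fin m, PowerSeries.mk fun k =>
        (bernoulli k / (Nat.factorial k : ℚ)) • (MvPolynomial.X i ^ k))

namespace HBaux

variable {m : ℕ}

noncomputable def f (m : ℕ) (i : Fin m) : PowerSeries (MvPolynomial (Fin m) ℚ) :=
  PowerSeries.mk fun k => (bernoulli k / (Nat.factorial k : ℚ)) • (MvPolynomial.X i ^ k)

lemma coeff_f (k : ℕ) (i : Fin m) :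
    PowerSeries.coeff k (f m i) =
      MvPolynomial.C (bernoulli k / (Nat.factorial k : ℚ)) * MvPolynomial.X i ^ k := by
  simp [f, MvPolynomial.smul_eq_C_mul]

lemma coeff_f0 (i : Fin m) : PowerSeries.coeff 0 (f m i) = 1 := by
  simp [coeff_f]

lemma coeff_f1 (i : Fin m) :
    PowerSeries.coeff 1 (f m i) = MvPolynomial.C (-(1:ℚ)/2) * MvPolynomial.X i := by
  rw [coeff_f]; norm_num

lemma coeff_f2 (i : Fin m) :
    PowerSeries.coeff 2 (f m i) = MvPolynomial.C ((1:ℚ)/12) * MvPolynomial.X i ^ 2 := by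
  rw [coeff_f]; norm_num [bernoulli, bernoulli'_two, Nat.factorial]

lemma coeff_f3 (i : Fin m) : PowerSeries.coeff 3 (f m i) = 0 := by
  rw [coeff_f]; norm_num [bernoulli, bernoulli'_three]

lemma main (s : Finset (Fin m)) :
    PowerSeries.coeff 0 (∏ i ∈ s, f m i) = 1 ∧
    PowerSeries.coeff 1 (∏ i ∈ s, f m i) =
      MvPolynomial.C (-(1:ℚ)/2) * (∑ i ∈ s, MvPolynomial.X i) ∧
    PowerSeries.coeff 2 (∏ i ∈ s, f m i) =
      MvPolynomial.C ((1:ℚ)/24) * (3 * (∑ i ∈ s, MvPolynomial.X i)^2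
        - ∑ i ∈ s, MvPolynomial.X i ^ 2) ∧
    PowerSeries.coeff 3 (∏ i ∈ s, f m i) =
      MvPolynomial.C ((1:ℚ)/48) * ((∑ i ∈ s, MvPolynomial.X i) * (∑ i ∈ s, MvPolynomial.X i ^ 2)
        - (∑ i ∈ s, MvPolynomial.X i)^3) := by
  classical
  induction s using Finset.induction_on with
  | empty => simp
  | @insert a s ha ih =>
    obtain ⟨h0, h1, h2, h3⟩ := ih
    rw [Finset.prod_insert ha]
    have c0 : PowerSeries.coeff (R := MvPolynomial (Fin m) ℚ) 0 (f m a * ∏ i ∈ s, f m i) = 1 := by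
      simp [PowerSeries.coeff_mul, h0, coeff_f0]
    have key : ∀ n, PowerSeries.coeff (R := MvPolynomial (Fin m) ℚ) n (f m a * ∏ i ∈ s, f m i)
        = ∑ k ∈ Finset.range (n+1),
            PowerSeries.coeff k (f m a) * PowerSeries.coeff (n - k) (∏ i ∈ s, f m i) := by
      intro n
      rw [PowerSeries.coeff_mul, Finset.Nat.sum_antidiagonal_eq_sum_range_succ_mk]
    have hc : (48 : MvPolynomial (Fin m) ℚ) * MvPolynomial.C ((1:ℚ)/48) = 1 := by
      rw [show ((48:MvPolynomial (Fin m) ℚ)) = MvPolynomial.C ((48:ℚ)) from (map_ofNat MvPolynomial.C 48).symm, ← map_mul]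
      norm_num
    refine ⟨c0, ?_, ?_, ?_⟩ <;>
      simp only [key, Finset.sum_range_succ, Finset.sum_range_zero, Finset.sum_insert ha,
        coeff_f0, coeff_f1, coeff_f2, coeff_f3, h0, h1, h2, h3] <;>
      (try simp only [show (-(1:ℚ)/2) = (-24) * (1/48) from by norm_num,
        show ((1:ℚ)/24) = 2 * (1/48) from by norm_num,
        show ((1:ℚ)/12) = 4 * (1/48) from by norm_num,
        map_mul, map_neg, map_ofNat])
    · ring
    · linear_combination (12 * MvPolynomial.C ((1:ℚ)/48) * MvPolynomial.X a *
        (∑ i ∈ s, MvPolynomial.X i)) * hc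
    · linear_combination (MvPolynomial.C ((1:ℚ)/48) * MvPolynomial.X a *
        ((∑ i ∈ s, MvPolynomial.X i ^ 2) - 3 * (∑ i ∈ s, MvPolynomial.X i)^2
          - 2 * MvPolynomial.X a * (∑ i ∈ s, MvPolynomial.X i))) * hc

end HBaux

/-- `B₂ = (3p₁² - p₂)/12` and `B₃ = -p₁(p₁² - p₂)/8`. -/
theorem higherBernoulli_two_three (m : ℕ) (hm : 1 ≤ m) :
    higherBernoulli m 2 =
      MvPolynomial.C ((1 : ℚ) / 12) * (3 * psum m 1 ^ 2 - psum m 2) ∧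
    higherBernoulli m 3 =
      MvPolynomial.C (-(1 : ℚ) / 8) * (psum m 1 * (psum m 1 ^ 2 - psum m 2)) := by
  obtain ⟨h0, h1, h2, h3⟩ := HBaux.main (m := m) Finset.univ
  have hprod : (∏ i : Fin m, PowerSeries.mk fun k =>
      (bernoulli k / (Nat.factorial k : ℚ)) • (MvPolynomial.X i ^ k)) = ∏ i : Fin m, HBaux.f m i :=
    rfl
  constructor
  · rw [higherBernoulli, hprod, h2, MvPolynomial.smul_eq_C_mul, ← mul_assoc, ← map_mul,
      show (Nat.factorial 2 : ℚ) * ((1:ℚ)/24) = 1/12 from by norm_num [Nat.factorial]]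
    simp only [psum, pow_one]
  · rw [higherBernoulli, hprod, h3, MvPolynomial.smul_eq_C_mul, ← mul_assoc, ← map_mul,
      show (Nat.factorial 3 : ℚ) * ((1:ℚ)/48) = 1/8 from by norm_num [Nat.factorial],
      show (-(1:ℚ)/8) = (-1) * (1/8) from by norm_num, map_mul, map_neg, map_one]
    simp only [psum, pow_one]
    ring
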